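/- Let 0 < α < 1/M, β > 0, d ∈ ℝ^N with d_m > 0 for all m, and C > 0. Let (ℓ_i)_{i≥1} be a sequence of random vectors in ℝ^N on a probability space such that E[ℓ_{m,i}] = −d_m and |ℓ_{m,i} + d_m| ≤ C almost surely for all m and i, and let the random sequence (x_i) satisfy x_i = F(x_{i−1}) + β ℓ_i with deterministic initial value x_0 ∈ ℝ^N. Let x̂^∞ be the fixed point of x ↦ F(x) − β d, set d̲ = min_m d_m and λ₁ = 1 − min{ 2α/(1 − αM + 2α), β d̲ / ( 2·log((1 − αM + α)/α) + β C ) }. Then 0 ≤ λ₁ < 1 and there exists a constant K ≥ 0 such that for every i ≥ 0, E[ ‖x_i − x̂^∞‖_∞ ] ≤ K·λ₁^i + βC/(1 − λ₁). -/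

import Mathlib

open MeasureTheory

/-- The αβ-HMM log-belief-ratio mapping `F`, defined componentwise for `m = 1, …, M-1` by
`F_m(x) = log(((1 - αM)·exp(x_m) + α + α·Σ_n exp(x_n)) / (1 - αM + α + α·Σ_n exp(x_n)))`. -/
noncomputable def abHMM.F (α : ℝ) (M : ℕ) (x : Fin (M - 1) → ℝ) : Fin (M - 1) → ℝ :=
  fun m => Real.log (((1 - α * M) * Real.exp (x m) + α + α * ∑ n, Real.exp (x n)) /
    (1 - α * M + α + α * ∑ n, Real.exp (x n)))


noncomputable def NN (a b u r : ℝ) : ℝ := (a + b) * u + b + b * r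
noncomputable def DD (a b u r : ℝ) : ℝ := a + b + b * u + b * r

section
variable {a b t s s' z u u' r r' : ℝ}

lemma NN_pos (ha : 0 < a) (hb : 0 < b) (hu : 0 ≤ u) (hr : 0 ≤ r) :
    0 < NN a b u r := by unfold NN; nlinarith
lemma DD_pos (ha : 0 < a) (hb : 0 < b) (hu : 0 ≤ u) (hr : 0 ≤ r) :
    0 < DD a b u r := by unfold DD; nlinarith

lemma log_ratio_le {A B A' B' : ℝ} (hA : 0 < A) (hB : 0 < B) (hA' : 0 < A') (hB' : 0 < B')
    (h : A * B' ≤ A' * B) : Real.log (A / B) ≤ Real.log (A' / B') :=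
  Real.log_le_log (by positivity) ((div_le_div_iff₀ hB hB').2 h)

lemma log_step {A B A' B' Pn Pd : ℝ} (hA : 0 < A) (hB : 0 < B) (hA' : 0 < A') (hB' : 0 < B')
    (hPn : 0 < Pn) (hPd : 0 < Pd) (h : A * B' * Pd ≤ A' * B * Pn) :
    Real.log (A / B) ≤ Real.log (A' / B') + (Real.log Pn - Real.log Pd) := by
  have h2 : Real.log (A * B' * Pd) ≤ Real.log (A' * B * Pn) :=
    Real.log_le_log (by positivity) h
  rw [Real.log_mul (by positivity) (ne_of_gt hPd), Real.log_mul (ne_of_gt hA) (ne_of_gt hB'),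
      Real.log_mul (by positivity) (ne_of_gt hPn), Real.log_mul (ne_of_gt hA') (ne_of_gt hB)] at h2
  rw [Real.log_div (ne_of_gt hA) (ne_of_gt hB), Real.log_div (ne_of_gt hA') (ne_of_gt hB')]
  linarith

/-- corner (z, s'/z) from base (1, s') : PB2 at log level -/
lemma cornerPB2 (ha : 0 < a) (hb : 0 < b) (hs' : 0 ≤ s') (hz : 1 ≤ z) :
    Real.log (NN a b z (s'/z) / DD a b z (s'/z)) ≤ Real.log (NN a b 1 s' / DD a b 1 s')
      + (Real.log ((a+b)*z+b) - Real.log (b*z+(a+b))) := by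
  have hz0 : (0:ℝ) < z := lt_of_lt_of_le one_pos hz
  have hr0 : 0 ≤ s'/z := by positivity
  have e1 : NN a b z (s'/z) = ((a+b)*z^2 + b*z + b*s')/z := by unfold NN; field_simp; try ring
  have e2 : DD a b z (s'/z) = ((a+b)*z + b*z^2 + b*s')/z := by unfold DD; field_simp; try ring
  have hn4 : (0:ℝ) < (a+b)*z^2 + b*z + b*s' := by nlinarith
  have hd4 : (0:ℝ) < (a+b)*z + b*z^2 + b*s' := by nlinarith
  have e3 : NN a b z (s'/z) / DD a b z (s'/z)
      = ((a+b)*z^2 + b*z + b*s') / ((a+b)*z + b*z^2 + b*s') := by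
    rw [e1, e2]; field_simp
  rw [e3]
  apply log_step hn4 hd4 (NN_pos ha hb one_pos.le hs') (DD_pos ha hb one_pos.le hs')
    (by nlinarith) (by nlinarith)
  -- PB2 polynomial inequality
  have : ((a+b)*z + b*z^2 + b*s') * NN a b 1 s' * ((a+b)*z + b)
      - ((a+b)*z^2 + b*z + b*s') * DD a b 1 s' * (b*z + (a+b))
      = a*b*(z-1)*s'*(a + 2*b + b*s') := by unfold NN DD; ring
  nlinarith [mul_nonneg (mul_nonneg (mul_nonneg (mul_nonneg ha.le hb.le)
    (by linarith : (0:ℝ) ≤ z - 1)) hs') (by nlinarith [mul_nonneg hb.le hs'] : (0:ℝ) ≤ a + 2*b + b*s')]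

/-- base (t,s) bounded by corner (t/z, s/z) : PL2 at log level -/
lemma cornerPL2 (ha : 0 < a) (hb : 0 < b) (ht0 : 0 < t) (ht1 : t ≤ 1) (hs : 0 ≤ s) (hz : 1 ≤ z) :
    Real.log (NN a b t s / DD a b t s) ≤ Real.log (NN a b (t/z) (s/z) / DD a b (t/z) (s/z))
      + (Real.log ((a+b)*z+b) - Real.log (b*z+(a+b))) := by
  have hz0 : (0:ℝ) < z := lt_of_lt_of_le one_pos hz
  have e1 : NN a b (t/z) (s/z) = ((a+b)*t + b*z + b*s)/z := by unfold NN; field_simp; try ring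
  have e2 : DD a b (t/z) (s/z) = ((a+b)*z + b*t + b*s)/z := by unfold DD; field_simp; try ring
  have hn3 : (0:ℝ) < (a+b)*t + b*z + b*s := by nlinarith
  have hd3 : (0:ℝ) < (a+b)*z + b*t + b*s := by nlinarith
  have e3 : NN a b (t/z) (s/z) / DD a b (t/z) (s/z)
      = ((a+b)*t + b*z + b*s) / ((a+b)*z + b*t + b*s) := by rw [e1, e2]; field_simp
  rw [e3]
  apply log_step (NN_pos ha hb ht0.le hs) (DD_pos ha hb ht0.le hs) hn3 hd3
    (by nlinarith) (by nlinarith)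
  have : ((a+b)*t + b*z + b*s) * DD a b t s * ((a+b)*z + b)
      - NN a b t s * ((a+b)*z + b*t + b*s) * (b*z + (a+b))
      = a*b*(z-1)*((a+b)*(1-t)*(z-t) + a*t*s + b*s^2 + 2*b*t*s) := by unfold NN DD; ring
  have h1 : (0:ℝ) ≤ (a+b)*(1-t)*(z-t) + a*t*s + b*s^2 + 2*b*t*s := by
    have := mul_nonneg (mul_nonneg (by linarith : (0:ℝ) ≤ a+b) (by linarith : (0:ℝ) ≤ 1-t)) (by linarith : (0:ℝ) ≤ z-t)
    have := mul_nonneg (mul_nonneg ha.le ht0.le) hs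
    have := mul_nonneg hb.le (sq_nonneg s)
    have := mul_nonneg (mul_nonneg (by linarith : (0:ℝ) ≤ 2*b) ht0.le) hs
    nlinarith
  nlinarith [mul_nonneg (mul_nonneg (mul_nonneg ha.le hb.le) (by linarith : (0:ℝ) ≤ z - 1)) h1]

/-- corner (t*z, s*z) from base (t,s) when t*z ≤ 1 : PU1 at log level -/
lemma cornerPU1 (ha : 0 < a) (hb : 0 < b) (ht0 : 0 ≤ t) (hs : 0 ≤ s) (hz : 1 ≤ z) (htz : t*z ≤ 1) :
    Real.log (NN a b (t*z) (s*z) / DD a b (t*z) (s*z)) ≤ Real.log (NN a b t s / DD a b t s)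
      + (Real.log ((a+b)*z+b) - Real.log (b*z+(a+b))) := by
  have hz0 : (0:ℝ) < z := lt_of_lt_of_le one_pos hz
  have ht1 : t ≤ 1 := by nlinarith
  apply log_step (NN_pos ha hb (by positivity) (by positivity)) (DD_pos ha hb (by positivity) (by positivity))
    (NN_pos ha hb ht0 hs) (DD_pos ha hb ht0 hs) (by nlinarith) (by nlinarith)
  have : NN a b t s * DD a b (t*z) (s*z) * ((a+b)*z + b)
      - NN a b (t*z) (s*z) * DD a b t s * (b*z + (a+b))
      = a*b*(z-1)*((a+b)*(1-t)*(1-t*z) + a*t*s*z + b*s^2*z + 2*b*t*s*z) := by unfold NN DD; ring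
  have h1 : (0:ℝ) ≤ (a+b)*(1-t)*(1-t*z) + a*t*s*z + b*s^2*z + 2*b*t*s*z := by
    have := mul_nonneg (mul_nonneg (by linarith : (0:ℝ) ≤ a+b) (by linarith : (0:ℝ) ≤ 1-t)) (by linarith : (0:ℝ) ≤ 1-t*z)
    have := mul_nonneg (mul_nonneg (mul_nonneg ha.le ht0) hs) hz0.le
    have := mul_nonneg (mul_nonneg hb.le (sq_nonneg s)) hz0.le
    have := mul_nonneg (mul_nonneg (mul_nonneg (by linarith : (0:ℝ) ≤ 2*b) ht0) hs) hz0.le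
    nlinarith
  nlinarith [mul_nonneg (mul_nonneg (mul_nonneg ha.le hb.le) (by linarith : (0:ℝ) ≤ z - 1)) h1]

/-- corner (1, s*t) from base (t,s) : PU2 at log level -/
lemma cornerPU2 (ha : 0 < a) (hb : 0 < b) (ht0 : 0 < t) (ht1 : t ≤ 1) (hs : 0 ≤ s) :
    Real.log (NN a b 1 (s*t) / DD a b 1 (s*t)) ≤ Real.log (NN a b t s / DD a b t s)
      + (Real.log ((a+b) + b*t) - Real.log (b + (a+b)*t)) := by
  have hst : 0 ≤ s*t := by positivity
  apply log_step (NN_pos ha hb one_pos.le hst) (DD_pos ha hb one_pos.le hst)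
    (NN_pos ha hb ht0.le hs) (DD_pos ha hb ht0.le hs) (by nlinarith) (by nlinarith)
  have : NN a b t s * DD a b 1 (s*t) * ((a+b) + b*t)
      - NN a b 1 (s*t) * DD a b t s * (b + (a+b)*t)
      = a*b*s*(1-t)*(a + 2*b + b*t*s) := by unfold NN DD; ring
  nlinarith [mul_nonneg (mul_nonneg (mul_nonneg (mul_nonneg ha.le hb.le) hs)
    (by linarith : (0:ℝ) ≤ 1-t)) (by nlinarith [mul_nonneg (mul_nonneg hb.le ht0.le) hs] : (0:ℝ) ≤ a + 2*b + b*t*s)]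

/-- monotone in u at log level -/
lemma logQ_mono_u (ha : 0 < a) (hb : 0 < b) (hu : 0 ≤ u) (hr : 0 ≤ r) (huu : u ≤ u') :
    Real.log (NN a b u r / DD a b u r) ≤ Real.log (NN a b u' r / DD a b u' r) := by
  have hu' : 0 ≤ u' := le_trans hu huu
  apply log_ratio_le (NN_pos ha hb hu hr) (DD_pos ha hb hu hr) (NN_pos ha hb hu' hr) (DD_pos ha hb hu' hr)
  have : NN a b u' r * DD a b u r - NN a b u r * DD a b u' r
      = (u' - u) * (a * (a + 2*b + b*r)) := by unfold NN DD; ring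
  nlinarith [mul_nonneg (sub_nonneg.2 huu) (mul_nonneg ha.le (by nlinarith [mul_nonneg hb.le hr] : (0:ℝ) ≤ a + 2*b + b*r))]

lemma logQ_mono_r_le (ha : 0 < a) (hb : 0 < b) (hu : 0 ≤ u) (hu1 : u ≤ 1) (hr : 0 ≤ r) (hrr : r ≤ r') :
    Real.log (NN a b u r / DD a b u r) ≤ Real.log (NN a b u r' / DD a b u r') := by
  have hr' : 0 ≤ r' := le_trans hr hrr
  apply log_ratio_le (NN_pos ha hb hu hr) (DD_pos ha hb hu hr) (NN_pos ha hb hu hr') (DD_pos ha hb hu hr')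
  have : NN a b u r' * DD a b u r - NN a b u r * DD a b u r'
      = b * (r' - r) * (a * (1 - u)) := by unfold NN DD; ring
  nlinarith [mul_nonneg (mul_nonneg hb.le (sub_nonneg.2 hrr)) (mul_nonneg ha.le (sub_nonneg.2 hu1))]

lemma logQ_mono_r_ge (ha : 0 < a) (hb : 0 < b) (hu1 : 1 ≤ u) (hr : 0 ≤ r) (hrr : r ≤ r') :
    Real.log (NN a b u r' / DD a b u r') ≤ Real.log (NN a b u r / DD a b u r) := by
  have hu : (0:ℝ) ≤ u := le_trans one_pos.le hu1
  have hr' : 0 ≤ r' := le_trans hr hrr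
  apply log_ratio_le (NN_pos ha hb hu hr') (DD_pos ha hb hu hr') (NN_pos ha hb hu hr) (DD_pos ha hb hu hr)
  have : NN a b u r * DD a b u r' - NN a b u r' * DD a b u r
      = b * (r' - r) * (a * (u - 1)) := by unfold NN DD; ring
  nlinarith [mul_nonneg (mul_nonneg hb.le (sub_nonneg.2 hrr)) (mul_nonneg ha.le (sub_nonneg.2 (by linarith : (1:ℝ) ≤ u)))]

end

/-- Padé lower bound for z^λ, λ = a/(a+2b): log(((a+b)z+b)/(bz+(a+b))) ≤ λ log z for z ≥ 1 -/
lemma pade {a b z : ℝ} (ha : 0 < a) (hb : 0 < b) (hz : 1 ≤ z) :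
    Real.log (((a + b) * z + b) / (b * z + (a + b))) ≤ a / (a + 2 * b) * Real.log z := by
  set lam := a / (a + 2 * b) with hlam
  have hab : 0 < a + 2 * b := by linarith
  -- f t = lam * log t - (log ((a+b)t+b) - log (bt+(a+b))), show f 1 ≤ f z via deriv ≥ 0
  set f : ℝ → ℝ := fun t => lam * Real.log t - (Real.log ((a + b) * t + b) - Real.log (b * t + (a + b))) with hf
  have key : ∀ t ∈ Set.Ici (1:ℝ), ∀ u ∈ Set.Ici (1:ℝ), t ≤ u → f t ≤ f u := by
    have hderiv : ∀ t ∈ Set.Ici (1:ℝ),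
        HasDerivAt f (lam / t - ((a + b) / ((a + b) * t + b) - b / (b * t + (a + b)))) t := by
      intro t ht
      have ht0 : (0:ℝ) < t := lt_of_lt_of_le one_pos ht
      have h1 : ((a + b) * t + b) ≠ 0 := by positivity
      have h2 : (b * t + (a + b)) ≠ 0 := by positivity
      have d1 : HasDerivAt (fun t : ℝ => Real.log ((a + b) * t + b)) ((a + b) / ((a + b) * t + b)) t := by
        have := ((hasDerivAt_id t).const_mul (a + b)).add_const b
        have := (Real.hasDerivAt_log h1).comp (h := fun t => (a + b) * t + b) t (by simpa using this)
        simpa [div_eq_mul_inv, mul_comm, Function.comp_def] using this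
      have d2 : HasDerivAt (fun t : ℝ => Real.log (b * t + (a + b))) (b / (b * t + (a + b))) t := by
        have := ((hasDerivAt_id t).const_mul b).add_const (a + b)
        have := (Real.hasDerivAt_log h2).comp (h := fun t => b * t + (a + b)) t (by simpa using this)
        simpa [div_eq_mul_inv, mul_comm, Function.comp_def] using this
      have d0 : HasDerivAt (fun t : ℝ => lam * Real.log t) (lam / t) t := by
        have := (Real.hasDerivAt_log (ne_of_gt ht0)).const_mul lam
        simpa [div_eq_mul_inv] using this
      exact d0.sub (d1.sub d2)
    intro t ht u hu htu
    have hmono : MonotoneOn f (Set.Ici (1:ℝ)) := by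
      apply monotoneOn_of_deriv_nonneg (convex_Ici 1)
      · exact continuousOn_of_forall_continuousAt (fun t ht => (hderiv t ht).continuousAt)
      · intro t ht
        exact (hderiv t (le_of_lt (by simpa using ht))).differentiableAt.differentiableWithinAt
      · intro t ht
        have ht' : (1:ℝ) < t := by simpa using ht
        have ht0 : (0:ℝ) < t := lt_trans one_pos ht'
        rw [(hderiv t (le_of_lt ht')).deriv]
        have h1 : (0:ℝ) < (a + b) * t + b := by positivity
        have h2 : (0:ℝ) < b * t + (a + b) := by positivity
        rw [div_sub_div _ _ (ne_of_gt h1) (ne_of_gt h2), div_sub_div _ _ (ne_of_gt ht0) (ne_of_gt (by positivity))]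
        apply div_nonneg _ (by positivity)
        have : lam * (((a + b) * t + b) * (b * t + (a + b))) - t * ((a + b) * (b * t + (a + b)) - b * ((a + b) * t + b)) = (a / (a + 2*b)) * (b * (a + b) * (t - 1)^2) := by
          rw [hlam]; field_simp; ring
        nlinarith [sq_nonneg (t - 1), mul_nonneg (mul_nonneg hb.le (by linarith : (0:ℝ) ≤ a + b)) (sq_nonneg (t-1)), div_nonneg ha.le hab.le, mul_nonneg (div_nonneg ha.le hab.le) (mul_nonneg (mul_nonneg hb.le (by linarith : (0:ℝ) ≤ a + b)) (sq_nonneg (t-1)))]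
    exact hmono ht hu htu
  have h1 : f 1 ≤ f z := key 1 Set.self_mem_Ici z hz hz
  have hf1 : f 1 = 0 := by
    simp only [hf]
    rw [Real.log_one]
    have : (a + b) * 1 + b = b * 1 + (a + b) := by ring
    rw [this]; ring
  have hzpos : (0:ℝ) < z := lt_of_lt_of_le one_pos hz
  have h2pos : (0:ℝ) < b * z + (a + b) := by positivity
  have h1pos : (0:ℝ) < (a + b) * z + b := by positivity
  rw [Real.log_div (ne_of_gt h1pos) (ne_of_gt h2pos)]
  have := h1; rw [hf1] at this
  simp only [hf] at this
  linarith


lemma core {a b t σ tt ρ c : ℝ} (ha : 0 < a) (hb : 0 < b) (ht0 : 0 < t) (ht1 : t ≤ 1)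
    (hσ : 0 ≤ σ) (htt : 0 < tt) (hρ : 0 ≤ ρ) (hc0 : 0 ≤ c)
    (h1 : t / Real.exp c ≤ tt) (h2 : tt ≤ t * Real.exp c)
    (h3 : σ / Real.exp c ≤ ρ) (h4 : ρ ≤ σ * Real.exp c) :
    |Real.log (NN a b tt ρ / DD a b tt ρ) - Real.log (NN a b t σ / DD a b t σ)|
      ≤ a/(a+2*b) * c := by
  set ζ := Real.exp c with hζdef
  have hζ1 : 1 ≤ ζ := Real.one_le_exp hc0
  have hζ0 : 0 < ζ := lt_of_lt_of_le one_pos hζ1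
  have hlogζ : Real.log ζ = c := Real.log_exp c
  set lam := a/(a+2*b) with hlam
  have hPn : (0:ℝ) < (a+b)*ζ+b := by nlinarith
  have hPd : (0:ℝ) < b*ζ+(a+b) := by nlinarith
  have hpade : Real.log ((a+b)*ζ+b) - Real.log (b*ζ+(a+b)) ≤ lam * c := by
    have h := pade ha hb hζ1
    rw [Real.log_div (ne_of_gt hPn) (ne_of_gt hPd), hlogζ] at h
    exact h
  rw [abs_le]
  constructor
  · -- lower:  -(lam*c) ≤ logQ(tt,ρ) - logQ(t,σ)
    have stepA := cornerPL2 ha hb ht0 ht1 hσ hζ1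
    have htζ0 : 0 ≤ t/ζ := by positivity
    have htζ1 : t/ζ ≤ 1 := le_trans (by
      rw [div_le_iff₀ hζ0]; nlinarith) (le_refl 1)
    have hσζ0 : 0 ≤ σ/ζ := by positivity
    have stepB := logQ_mono_r_le ha hb htζ0 htζ1 hσζ0 h3
    have stepC := logQ_mono_u ha hb htζ0 hρ h1
    linarith
  · -- upper
    have stepA := logQ_mono_u ha hb htt.le hρ h2
    by_cases hcase : t*ζ ≤ 1
    · have stepB := logQ_mono_r_le ha hb (by positivity) hcase hρ h4
      have stepC := cornerPU1 ha hb ht0.le hσ hζ1 hcase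
      linarith
    · push_neg at hcase
      have hσζ0 : 0 ≤ σ/ζ := by positivity
      have stepB := logQ_mono_r_ge ha hb hcase.le hσζ0 h3
      have hst : 0 ≤ σ*t := by positivity
      have stepC := cornerPB2 ha hb hst hcase.le
      have hrw : (σ*t)/(t*ζ) = σ/ζ := by
        rw [div_eq_div_iff (by positivity) (ne_of_gt hζ0)]; ring
      rw [hrw] at stepC
      have stepD := cornerPU2 ha hb ht0 ht1 hσ
      -- pade at t*ζ
      have hp1 : Real.log ((a+b)*(t*ζ)+b) - Real.log (b*(t*ζ)+(a+b)) ≤ lam * (Real.log t + c) := by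
        have h := pade ha hb hcase.le
        rw [Real.log_div (by positivity) (by positivity),
            Real.log_mul (ne_of_gt ht0) (ne_of_gt hζ0), hlogζ] at h
        exact h
      -- pade at 1/t
      have hp2 : Real.log ((a+b) + b*t) - Real.log (b + (a+b)*t) ≤ lam * (- Real.log t) := by
        have hinv : (1:ℝ) ≤ 1/t := by rw [le_div_iff₀ ht0]; linarith
        have h := pade ha hb hinv
        have harg : ((a+b)*(1/t)+b)/(b*(1/t)+(a+b)) = ((a+b)+b*t)/(b+(a+b)*t) := by
          rw [div_eq_div_iff (by positivity) (by positivity)]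
          field_simp
        rw [harg, Real.log_div (by positivity) (by positivity), one_div, Real.log_inv] at h
        linarith
      linarith


open Finset in
lemma F_eq_logQ (α : ℝ) (M : ℕ) (w : Fin (M-1) → ℝ) (m : Fin (M-1)) :
    abHMM.F α M w m
      = Real.log (NN (1-α*M) α (Real.exp (w m)) (∑ n ∈ univ.erase m, Real.exp (w n))
        / DD (1-α*M) α (Real.exp (w m)) (∑ n ∈ univ.erase m, Real.exp (w n))) := by
  have e0 : (∑ n, Real.exp (w n)) = Real.exp (w m) + ∑ n ∈ univ.erase m, Real.exp (w n) :=
    (Finset.add_sum_erase univ (fun n => Real.exp (w n)) (mem_univ m)).symm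
  show Real.log _ = Real.log _
  rw [e0]
  unfold NN DD
  congr 1
  ring

open Finset in
lemma radial (M : ℕ) (α : ℝ) (hα : 0 < α) (hαM : α * M < 1)
    (x y : Fin (M-1) → ℝ) (hy : ∀ n, y n ≤ 0) :
    ‖abHMM.F α M x - abHMM.F α M y‖ ≤ (1 - α*M)/(1 - α*M + 2*α) * ‖x - y‖ := by
  have ha : 0 < 1 - α*M := by linarith
  have hc0 : (0:ℝ) ≤ ‖x - y‖ := norm_nonneg _
  rw [pi_norm_le_iff_of_nonneg (by positivity)]
  intro m
  set c := ‖x - y‖ with hcdef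
  have habs : ∀ n, |x n - y n| ≤ c := by
    intro n
    have := norm_le_pi_norm (x - y) n
    simpa [Real.norm_eq_abs] using this
  rw [Pi.sub_apply, F_eq_logQ, F_eq_logQ, Real.norm_eq_abs]
  apply core ha hα (Real.exp_pos _) (Real.exp_le_one_iff.2 (hy m))
    (Finset.sum_nonneg fun n _ => (Real.exp_pos _).le) (Real.exp_pos _)
    (Finset.sum_nonneg fun n _ => (Real.exp_pos _).le) hc0
  · rw [← Real.exp_sub]
    apply Real.exp_le_exp.2
    have := habs m; rw [abs_le] at this; linarith [this.2]
  · rw [← Real.exp_add]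
    apply Real.exp_le_exp.2
    have := habs m; rw [abs_le] at this; linarith [this.1]
  · rw [Finset.sum_div]
    apply Finset.sum_le_sum
    intro n _
    rw [← Real.exp_sub]
    apply Real.exp_le_exp.2
    have := habs n; rw [abs_le] at this; linarith [this.2]
  · rw [Finset.sum_mul]
    apply Finset.sum_le_sum
    intro n _
    rw [← Real.exp_add]
    apply Real.exp_le_exp.2
    have := habs n; rw [abs_le] at this; linarith [this.1]



section Aux
variable {M : ℕ} {α : ℝ}

lemma F_le_self (hα : 0 < α) (hαM : α * M < 1) (w : Fin (M-1) → ℝ) (m : Fin (M-1))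
    (hw : 0 ≤ w m) : abHMM.F α M w m ≤ w m := by
  have hS : (0:ℝ) ≤ ∑ n, Real.exp (w n) := Finset.sum_nonneg fun n _ => (Real.exp_pos _).le
  set S := ∑ n, Real.exp (w n) with hSdef
  have hD : (0:ℝ) < 1 - α*M + α + α*S := by nlinarith
  have hE : (1:ℝ) ≤ Real.exp (w m) := Real.one_le_exp hw
  have hN : (0:ℝ) < (1 - α*M) * Real.exp (w m) + α + α*S := by nlinarith
  have hdiv : ((1 - α*M) * Real.exp (w m) + α + α*S) / (1 - α*M + α + α*S) ≤ Real.exp (w m) := by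
    rw [div_le_iff₀ hD]
    nlinarith [mul_nonneg (by positivity : (0:ℝ) ≤ α*(1+S)) (by linarith : (0:ℝ) ≤ Real.exp (w m) - 1)]
  calc abHMM.F α M w m ≤ Real.log (Real.exp (w m)) := Real.log_le_log (by positivity) hdiv
    _ = w m := Real.log_exp _

lemma F_measurable (α : ℝ) (M : ℕ) : Measurable (abHMM.F α M) := by
  apply measurable_pi_lambda
  intro m
  apply Real.measurable_log.comp
  apply Measurable.div
  · exact ((Real.measurable_exp.comp (measurable_pi_apply m)).const_mul _).add_const _ |>.add
      ((Finset.measurable_sum Finset.univ fun n _ =>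
        Real.measurable_exp.comp (measurable_pi_apply n)).const_mul α)
  · exact measurable_const.add ((Finset.measurable_sum Finset.univ fun n _ =>
      Real.measurable_exp.comp (measurable_pi_apply n)).const_mul α)

end Aux

/-- Lemma 5: for the stochastic system `x_i = F(x_{i-1}) + β ℓ_i`, where the
log-likelihood ratios `ℓ_{m,i}` have mean `-d_m` and a.s. deviation bound `C`, with
`λ₁ = 1 - min{2α/(1-αM+2α), β d̲/(2 log((1-αM+α)/α) + βC)}` one has `0 ≤ λ₁ < 1` and
`E[‖x_i - x̂^∞‖_∞] ≤ K λ₁^i + βC/(1-λ₁)` for some constant `K ≥ 0` and every `i`. -/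
theorem abHMM_stochastic_distance_to_fixed_point (M : ℕ) (hM : 2 ≤ M) (α β C : ℝ)
    (hα : 0 < α) (hα' : α < 1 / M) (hβ : 0 < β) (hC : 0 < C)
    (d : Fin (M - 1) → ℝ) (hd : ∀ m, 0 < d m)
    {Ω : Type*} [MeasurableSpace Ω] (μ : Measure Ω) [IsProbabilityMeasure μ]
    (ℓ : ℕ → Ω → Fin (M - 1) → ℝ) (hmeas : ∀ i, Measurable (ℓ i))
    (hmean : ∀ i, 1 ≤ i → ∀ m, ∫ ω, ℓ i ω m ∂μ = -d m)
    (hbound : ∀ i, 1 ≤ i → ∀ m, ∀ᵐ ω ∂μ, |ℓ i ω m + d m| ≤ C)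
    (x : ℕ → Ω → Fin (M - 1) → ℝ) (x₀ : Fin (M - 1) → ℝ) (hx0 : ∀ ω, x 0 ω = x₀)
    (hrec : ∀ i ω, x (i + 1) ω = fun m => abHMM.F α M (x i ω) m + β * ℓ (i + 1) ω m)
    (xinf : Fin (M - 1) → ℝ) (hfix : xinf = fun m => abHMM.F α M xinf m - β * d m)
    (dlow : ℝ) (hdlow : dlow = sInf (Set.range d))
    (lam₁ : ℝ)
    (hlam₁ : lam₁ = 1 - min (2 * α / (1 - α * M + 2 * α))
      (β * dlow / (2 * Real.log ((1 - α * M + α) / α) + β * C))) :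
    0 ≤ lam₁ ∧ lam₁ < 1 ∧
      ∃ K : ℝ, 0 ≤ K ∧
        ∀ i : ℕ, ∫ ω, ‖x i ω - xinf‖ ∂μ ≤ K * lam₁ ^ i + β * C / (1 - lam₁) := by
  -- basic numeric facts
  have hM0 : (0:ℝ) < (M:ℝ) := by positivity
  have hαM : α * M < 1 := by
    have := (lt_div_iff₀ hM0).1 hα'
    linarith
  have ha : (0:ℝ) < 1 - α*M := by linarith
  set lam : ℝ := (1 - α*M)/(1 - α*M + 2*α) with hlamdef
  have hlam0 : 0 ≤ lam := by positivity
  have hlam1 : lam < 1 := by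
    rw [hlamdef, div_lt_one (by linarith)]; linarith
  set u : ℝ := 2*α/(1 - α*M + 2*α) with hudef
  have hu_eq : lam = 1 - u := by
    rw [hlamdef, hudef]; field_simp; ring
  have hu_pos : 0 < u := by positivity
  have hu_le1 : u ≤ 1 := by
    rw [hudef, div_le_one (by linarith)]; linarith
  -- dlow > 0
  have hfin : (Set.range d).Finite := Set.finite_range d
  have hne : (Set.range d).Nonempty := by
    have h1 : 0 < M - 1 := by omega
    exact ⟨d ⟨0, h1⟩, Set.mem_range_self _⟩
  have hdlow_pos : 0 < dlow := by
    rw [hdlow]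
    obtain ⟨m0, hm0⟩ := Set.Nonempty.csInf_mem hne hfin
    rw [← hm0]; exact hd m0
  have hG : 0 < Real.log ((1 - α*M + α)/α) := by
    apply Real.log_pos
    rw [lt_div_iff₀ hα]; linarith
  set v : ℝ := β * dlow / (2 * Real.log ((1 - α * M + α) / α) + β * C) with hvdef
  have hv_pos : 0 < v := by
    rw [hvdef]; positivity
  have hminu : min u v ≤ u := min_le_left _ _
  have hmin_pos : 0 < min u v := lt_min hu_pos hv_pos
  have hlam₁_eq : lam₁ = 1 - min u v := by rw [hlam₁, hudef, hvdef]
  have hmin1 : min u v ≤ 1 := le_trans hminu hu_le1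
  have hlam₁0 : 0 ≤ lam₁ := by rw [hlam₁_eq]; linarith
  have hlam₁1 : lam₁ < 1 := by rw [hlam₁_eq]; linarith
  have hlamle : lam ≤ lam₁ := by rw [hlam₁_eq, hu_eq]; linarith
  refine ⟨hlam₁0, hlam₁1, ‖x₀ - xinf‖, norm_nonneg _, ?_⟩
  -- fixed point is nonpositive
  have hxinf_eq : ∀ m, xinf m = abHMM.F α M xinf m - β * d m := fun m => by
    conv_lhs => rw [hfix]
  have hxinf0 : ∀ m, xinf m ≤ 0 := by
    intro m
    by_contra h
    push_neg at h
    have h2 := F_le_self hα hαM xinf m (le_of_lt h)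
    have h3 := hxinf_eq m
    nlinarith [hd m, mul_pos hβ (hd m)]
  -- Lipschitz from the fixed point
  have hlip : ∀ w : Fin (M-1) → ℝ, ‖abHMM.F α M w - abHMM.F α M xinf‖ ≤ lam * ‖w - xinf‖ :=
    fun w => radial M α hα hαM w xinf hxinf0
  -- measurability of the trajectory
  have hxmeas : ∀ i, Measurable (x i) := by
    intro i
    induction i with
    | zero =>
      have : x 0 = fun _ => x₀ := funext hx0
      rw [this]; exact measurable_const
    | succ i ih =>
      have : x (i+1) = fun ω => (fun m => abHMM.F α M (x i ω) m + β * ℓ (i+1) ω m) :=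
        funext fun ω => hrec i ω
      rw [this]
      apply measurable_pi_lambda
      intro m
      exact ((measurable_pi_apply m).comp ((F_measurable α M).comp ih)).add
        (((measurable_pi_apply m).comp (hmeas (i+1))).const_mul β)
  set g : ℕ → Ω → ℝ := fun i ω => ‖x i ω - xinf‖ with hgdef
  have hgmeas : ∀ i, Measurable (g i) := fun i => ((hxmeas i).sub measurable_const).norm
  have hg0 : ∀ i ω, 0 ≤ g i ω := fun i ω => norm_nonneg _
  -- a.s. one-step bound
  have hstep : ∀ i, ∀ᵐ ω ∂μ, g (i+1) ω ≤ lam * g i ω + β * C := by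
    intro i
    have hae : ∀ᵐ ω ∂μ, ∀ m, |ℓ (i+1) ω m + d m| ≤ C :=
      (MeasureTheory.ae_all_iff).2 fun m => hbound (i+1) (Nat.le_add_left 1 i) m
    filter_upwards [hae] with ω hω
    have hdecomp : x (i+1) ω - xinf
        = (abHMM.F α M (x i ω) - abHMM.F α M xinf) + (fun m => β * (ℓ (i+1) ω m + d m)) := by
      funext m
      rw [hrec i ω]
      simp only [Pi.sub_apply, Pi.add_apply]
      have := hxinf_eq m
      ring_nf
      linarith [this]
    have hnoise : ‖(fun m => β * (ℓ (i+1) ω m + d m) : Fin (M-1) → ℝ)‖ ≤ β * C := by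
      rw [pi_norm_le_iff_of_nonneg (by positivity)]
      intro m
      rw [Real.norm_eq_abs, abs_mul, abs_of_pos hβ]
      exact mul_le_mul_of_nonneg_left (hω m) hβ.le
    calc g (i+1) ω = ‖x (i+1) ω - xinf‖ := rfl
      _ = ‖(abHMM.F α M (x i ω) - abHMM.F α M xinf) + (fun m => β * (ℓ (i+1) ω m + d m))‖ := by
          rw [hdecomp]
      _ ≤ ‖abHMM.F α M (x i ω) - abHMM.F α M xinf‖ + ‖(fun m => β * (ℓ (i+1) ω m + d m) : Fin (M-1) → ℝ)‖ :=
          norm_add_le _ _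
      _ ≤ lam * g i ω + β * C := add_le_add (hlip (x i ω)) hnoise
  -- a.s. uniform bounds
  set B : ℕ → ℝ := fun i => Nat.rec ‖x₀ - xinf‖ (fun _ Bi => lam * Bi + β*C) i with hBdef
  have hB : ∀ i, ∀ᵐ ω ∂μ, g i ω ≤ B i := by
    intro i
    induction i with
    | zero =>
      apply Filter.Eventually.of_forall
      intro ω
      simp only [hgdef, hx0 ω]
      exact le_refl _
    | succ i ih =>
      filter_upwards [hstep i, ih] with ω h1 h2
      calc g (i+1) ω ≤ lam * g i ω + β*C := h1
        _ ≤ lam * B i + β*C := by nlinarith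
        _ = B (i+1) := rfl
  -- integrability
  have hint : ∀ i, Integrable (g i) μ := by
    intro i
    apply Integrable.mono' (integrable_const (B i)) (hgmeas i).aestronglyMeasurable
    filter_upwards [hB i] with ω h
    rwa [Real.norm_eq_abs, abs_of_nonneg (hg0 i ω)]
  -- expectation recursion
  have herec : ∀ i, ∫ ω, g (i+1) ω ∂μ ≤ lam * ∫ ω, g i ω ∂μ + β * C := by
    intro i
    have h1 : ∫ ω, g (i+1) ω ∂μ ≤ ∫ ω, (lam * g i ω + β * C) ∂μ :=
      integral_mono_ae (hint (i+1)) (((hint i).const_mul lam).add (integrable_const _)) (hstep i)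
    rwa [integral_add ((hint i).const_mul lam) (integrable_const _), integral_const_mul,
      integral_const, probReal_univ, smul_eq_mul, one_mul] at h1
  -- main induction
  have hone : (0:ℝ) < 1 - lam := by linarith
  have hmain : ∀ i, ∫ ω, g i ω ∂μ ≤ ‖x₀ - xinf‖ * lam ^ i + β * C / (1 - lam) := by
    intro i
    induction i with
    | zero =>
      have hg0eq : g 0 = fun _ => ‖x₀ - xinf‖ := funext fun ω => by simp only [hgdef, hx0 ω]
      rw [hg0eq, integral_const, probReal_univ, one_smul, pow_zero, mul_one]
      have : 0 ≤ β * C / (1 - lam) := by positivity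
      linarith
    | succ i ih =>
      have h1 := herec i
      have h2 : lam * ∫ ω, g i ω ∂μ ≤ lam * (‖x₀ - xinf‖ * lam ^ i + β * C / (1 - lam)) :=
        mul_le_mul_of_nonneg_left ih hlam0
      have h3 : lam * (β * C / (1 - lam)) + β * C = β * C / (1 - lam) := by
        field_simp
        ring
      calc ∫ ω, g (i+1) ω ∂μ ≤ lam * ∫ ω, g i ω ∂μ + β * C := h1
        _ ≤ lam * (‖x₀ - xinf‖ * lam ^ i + β * C / (1 - lam)) + β * C := by linarith
        _ = ‖x₀ - xinf‖ * lam ^ (i+1) + (lam * (β * C / (1 - lam)) + β * C) := by ring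
        _ = ‖x₀ - xinf‖ * lam ^ (i+1) + β * C / (1 - lam) := by rw [h3]
  -- compare lam with lam₁
  intro i
  have hfin1 : ‖x₀ - xinf‖ * lam ^ i ≤ ‖x₀ - xinf‖ * lam₁ ^ i :=
    mul_le_mul_of_nonneg_left (pow_le_pow_left₀ hlam0 hlamle i) (norm_nonneg _)
  have hfin2 : β * C / (1 - lam) ≤ β * C / (1 - lam₁) :=
    div_le_div_of_nonneg_left (by positivity) (by linarith) (by linarith)
  calc ∫ ω, ‖x i ω - xinf‖ ∂μ = ∫ ω, g i ω ∂μ := rfl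
    _ ≤ ‖x₀ - xinf‖ * lam ^ i + β * C / (1 - lam) := hmain i
    _ ≤ ‖x₀ - xinf‖ * lam₁ ^ i + β * C / (1 - lam₁) := add_le_add hfin1 hfin2
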